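/- arXiv:2509.15256 — 3 statements merged into one kernel-verified Lean document; each statement's English description precedes it below -/
import Mathlib

section
/- Under the hypotheses of the SGD convergence theorem (f : E → ℝ L-smooth and bounded below by f*, updates θ_{k+1} = θ_k − η·g_k with unbiased conditional gradients of conditional variance at most σ², 0 < η ≤ 1/L), the limit superior as K → ∞ of min_{0 ≤ k ≤ K−1} E[‖∇f(θ_k)‖²] is at most η·L·σ²; in particular, the smallest expected squared gradient norm along the iterates converges to a neighborhood of zero of radius η·L·σ². -/
open MeasureTheory
open scoped RealInnerProductSpace


lemma sgd_descent_lemma {E : Type*} [NormedAddCommGroup E] [InnerProductSpace ℝ E]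
    [CompleteSpace E] (f : E → ℝ) (L : ℝ) (hL : 0 ≤ L)
    (hdiff : Differentiable ℝ f) (hlip : LipschitzWith L.toNNReal (gradient f))
    (x v : E) :
    f (x + v) ≤ f x + ⟪gradient f x, v⟫ + L / 2 * ‖v‖ ^ 2 := by
  set φ' : ℝ → ℝ := fun t => ⟪gradient f (x + t • v), v⟫ with hφ'
  have hderiv : ∀ t : ℝ, HasDerivAt (fun s : ℝ => f (x + s • v)) (φ' t) t := by
    intro t
    have h1 : HasDerivAt (fun s : ℝ => x + s • v) v t := by
      simpa using ((hasDerivAt_id t).smul_const v).const_add x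
    have h2 : HasFDerivAt f (InnerProductSpace.toDual ℝ E (gradient f (x + t • v)))
        (x + t • v) := hasGradientAt_iff_hasFDerivAt.mp (hdiff _).hasGradientAt
    simpa [φ', InnerProductSpace.toDual_apply_apply, Function.comp_def] using h2.comp_hasDerivAt t h1
  have hcontg : Continuous (gradient f) := hlip.continuous
  have hcont : Continuous φ' := by
    exact (hcontg.comp (by continuity)).inner continuous_const
  have hFTC : ∫ t in (0:ℝ)..1, φ' t = f (x + v) - f x := by
    have := intervalIntegral.integral_eq_sub_of_hasDerivAt (a := 0) (b := 1)
      (fun t _ => hderiv t) (hcont.intervalIntegrable 0 1)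
    simpa using this
  have hbound : ∀ t ∈ Set.Icc (0:ℝ) 1, φ' t ≤ ⟪gradient f x, v⟫ + L * ‖v‖ ^ 2 * t := by
    intro t ht
    have hdist : ‖gradient f (x + t • v) - gradient f x‖ ≤ L * (t * ‖v‖) := by
      have := hlip.dist_le_mul (x + t • v) x
      rw [Real.coe_toNNReal L hL] at this
      simpa [dist_eq_norm, norm_smul, abs_of_nonneg ht.1] using this
    have h2 : φ' t - ⟪gradient f x, v⟫ ≤ L * ‖v‖ ^ 2 * t := by
      have h3 : φ' t - ⟪gradient f x, v⟫
          = ⟪gradient f (x + t • v) - gradient f x, v⟫ := by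
        simp [φ', inner_sub_left]
      rw [h3]
      calc ⟪gradient f (x + t • v) - gradient f x, v⟫
          ≤ ‖gradient f (x + t • v) - gradient f x‖ * ‖v‖ := real_inner_le_norm _ _
        _ ≤ L * (t * ‖v‖) * ‖v‖ := by
            exact mul_le_mul_of_nonneg_right hdist (norm_nonneg v)
        _ = L * ‖v‖ ^ 2 * t := by ring
    linarith
  have hintle : ∫ t in (0:ℝ)..1, φ' t
      ≤ ∫ t in (0:ℝ)..1, (⟪gradient f x, v⟫ + L * ‖v‖ ^ 2 * t) := by
    apply intervalIntegral.integral_mono_on (by norm_num)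
      (hcont.intervalIntegrable 0 1)
      ((by fun_prop : Continuous (fun t : ℝ => ⟪gradient f x, v⟫ + L * ‖v‖ ^ 2 * t)).intervalIntegrable 0 1)
    exact hbound
  have hii : IntervalIntegrable (fun t : ℝ => L * ‖v‖ ^ 2 * t) MeasureTheory.volume 0 1 :=
    (by fun_prop : Continuous (fun t : ℝ => L * ‖v‖ ^ 2 * t)).intervalIntegrable 0 1
  have hcalc : ∫ t in (0:ℝ)..1, (⟪gradient f x, v⟫ + L * ‖v‖ ^ 2 * t)
      = ⟪gradient f x, v⟫ + L / 2 * ‖v‖ ^ 2 := by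
    have h5 : ∫ t in (0:ℝ)..1, L * ‖v‖ ^ 2 * t = L * ‖v‖ ^ 2 * ((1 ^ 2 - 0 ^ 2) / 2) := by
      rw [intervalIntegral.integral_const_mul, integral_id]
    rw [intervalIntegral.integral_add (intervalIntegrable_const) hii, h5,
      intervalIntegral.integral_const]
    norm_num
    ring
  linarith [hFTC ▸ (hintle.trans_eq hcalc)]
open MeasureTheory RealInnerProductSpace

lemma memLp_integrable_inner {Ω E : Type*} [NormedAddCommGroup E] [InnerProductSpace ℝ E]
    {m0 : MeasurableSpace Ω} {μ : Measure Ω} {X h : Ω → E}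
    (hX : MemLp X 2 μ) (hh : MemLp h 2 μ) :
    Integrable (fun ω => ⟪X ω, h ω⟫) μ := by
  refine (L2.integrable_inner (𝕜 := ℝ) (hX.toLp X) (hh.toLp h)).congr ?_
  filter_upwards [hX.coeFn_toLp, hh.coeFn_toLp] with ω h1 h2
  rw [h1, h2]

lemma sgd_orth {Ω E : Type*} [NormedAddCommGroup E] [InnerProductSpace ℝ E] [CompleteSpace E]
    {m m0 : MeasurableSpace Ω} (hm : m ≤ m0) (μ : Measure Ω) [IsProbabilityMeasure μ]
    {X h : Ω → E} (hX : MemLp X 2 μ) (hXm : AEStronglyMeasurable[m] X μ)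
    (hh : MemLp h 2 μ) (h0 : μ[h|m] =ᵐ[μ] 0) :
    ∫ ω, ⟪X ω, h ω⟫ ∂μ = 0 := by
  set H : Lp E 2 μ := hh.toLp h with hH
  set X' : Lp E 2 μ := hX.toLp X with hX'
  have hXm' : AEStronglyMeasurable[m] (X' : Ω → E) μ :=
    AEStronglyMeasurable.congr hXm (hX.coeFn_toLp).symm
  -- condexpL2 H is a.e. equal to μ[h|m]
  have hbridge : (condExpL2 E ℝ hm H : Ω → E) =ᵐ[μ] μ[h|m] := by
    refine ae_eq_condExp_of_forall_setIntegral_eq hm (hh.integrable one_le_two)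
      (fun s _ _ => (integrable_condExpL2_of_isFiniteMeasure hm).integrableOn)
      (fun s hs hμs => ?_) (aestronglyMeasurable_condExpL2 hm H)
    rw [integral_condExpL2_eq hm H hs hμs.ne]
    exact setIntegral_congr_ae (hm s hs) ((hh.coeFn_toLp).mono fun ω hω _ => hω)
  have hcond0 : (condExpL2 E ℝ hm H : Ω → E) =ᵐ[μ] 0 := hbridge.trans h0
  have h1 : ∫ ω, ⟪X ω, h ω⟫ ∂μ = ⟪X', H⟫ := by
    rw [L2.inner_def]
    refine integral_congr_ae ?_
    filter_upwards [hX.coeFn_toLp, hh.coeFn_toLp] with ω h1 h2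
    rw [h1, h2]
  have h2 : (⟪X', H⟫ : ℝ) = ⟪H, X'⟫ := real_inner_comm _ _
  have h3 : (⟪H, X'⟫ : ℝ) = ⟪(condExpL2 E ℝ hm H : Lp E 2 μ), X'⟫ :=
    (inner_condExpL2_eq_inner_fun hm H X' hXm').symm
  have h4 : (⟪(condExpL2 E ℝ hm H : Lp E 2 μ), X'⟫ : ℝ) = 0 := by
    rw [L2.inner_def]
    have : ∀ᵐ ω ∂μ, ⟪(condExpL2 E ℝ hm H : Ω → E) ω, (X' : Ω → E) ω⟫ = 0 := by
      filter_upwards [hcond0] with ω hω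
      simp [hω]
    rw [integral_congr_ae this, integral_zero]
  rw [h1, h2, h3, h4]

set_option maxHeartbeats 1000000

lemma memLp_integrable_sq {Ω E : Type*} [NormedAddCommGroup E] [InnerProductSpace ℝ E]
    {m0 : MeasurableSpace Ω} {μ : Measure Ω} {F : Ω → E} (hF : MemLp F 2 μ) :
    Integrable (fun ω => ‖F ω‖ ^ 2) μ := by
  refine (memLp_integrable_inner hF hF).congr (Filter.Eventually.of_forall fun ω => ?_)
  exact real_inner_self_eq_norm_sq _



/-- Under the hypotheses of the SGD convergence theorem, the limit superior as
`K → ∞` of `min_{0 ≤ k ≤ K-1} E[‖∇f(θ_k)‖²]` is at most `ηLσ²`: the smallest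
expected squared gradient norm converges to a neighborhood of zero of radius
`ηLσ²`. -/
theorem sgd_gradient_norm_limsup
    {E : Type*} [NormedAddCommGroup E] [InnerProductSpace ℝ E] [CompleteSpace E]
    (f : E → ℝ) (L : ℝ) (hL : 0 < L)
    (hdiff : Differentiable ℝ f)
    (hlip : LipschitzWith L.toNNReal (gradient f))
    (fstar : ℝ) (hbelow : ∀ x, fstar ≤ f x)
    {Ω : Type*} {m0 : MeasurableSpace Ω} (μ : Measure Ω) [IsProbabilityMeasure μ]
    (ℱ : Filtration ℕ m0)
    (θ g : ℕ → Ω → E) (θ₀ : E) (η σ : ℝ)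
    (hη : 0 < η) (hηL : η ≤ 1 / L)
    (hθ0 : ∀ ω, θ 0 ω = θ₀)
    (hupd : ∀ k ω, θ (k + 1) ω = θ k ω - η • g k ω)
    (hθadapted : ∀ k, StronglyMeasurable[ℱ k] (θ k))
    (hgmem : ∀ k, MemLp (g k) 2 μ)
    (hmean : ∀ k, μ[g k|ℱ k] =ᵐ[μ] fun ω => gradient f (θ k ω))
    (hvar : ∀ k, ∀ᵐ ω ∂μ,
      (μ[fun ω' => ‖g k ω' - gradient f (θ k ω')‖ ^ 2|ℱ k]) ω ≤ σ ^ 2) :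
    Filter.limsup
        (fun K : ℕ =>
          sInf ((fun k => ∫ ω, ‖gradient f (θ k ω)‖ ^ 2 ∂μ) '' Set.Iio K))
        Filter.atTop
      ≤ η * L * σ ^ 2 := by
  have hm : ∀ k, ℱ k ≤ m0 := fun k => ℱ.le k
  set G : ℕ → Ω → E := fun k ω => gradient f (θ k ω) with hG
  have hL0 : (0:ℝ) ≤ L := hL.le
  -- measurability and integrability facts
  have hθmem : ∀ k, MemLp (θ k) 2 μ := by
    intro k
    induction k with
    | zero =>
        have h : θ 0 = fun _ => θ₀ := funext hθ0
        rw [h]; exact memLp_const θ₀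
    | succ k ih =>
        have h : θ (k + 1) = fun ω => θ k ω - η • g k ω := funext (hupd k)
        rw [h]; exact ih.sub ((hgmem k).const_smul η)
  have hcontg : Continuous (gradient f) := hlip.continuous
  have hGFmeas : ∀ k, StronglyMeasurable[ℱ k] (G k) := fun k =>
    hcontg.comp_stronglyMeasurable (hθadapted k)
  have hGmeas : ∀ k, StronglyMeasurable (G k) := fun k => (hGFmeas k).mono (hm k)
  have hGmem : ∀ k, MemLp (G k) 2 μ := by
    intro k
    have hb : MemLp (fun ω => ‖gradient f 0‖ + L * ‖θ k ω‖) 2 μ :=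
      by have := (memLp_const (μ := μ) (p := 2) ‖gradient f 0‖).add (((hθmem k).norm).const_mul L); exact this
    refine MemLp.of_le hb (hGmeas k).aestronglyMeasurable
      (Filter.Eventually.of_forall fun ω => ?_)
    have h2 : ‖G k ω - gradient f 0‖ ≤ L * ‖θ k ω‖ := by
      have h3 := hlip.dist_le_mul (θ k ω) 0
      rw [Real.coe_toNNReal L hL0] at h3
      simpa [hG, dist_eq_norm] using h3
    have h4 : ‖G k ω‖ ≤ ‖gradient f 0‖ + L * ‖θ k ω‖ := by
      have h5 := norm_add_le (G k ω - gradient f 0) (gradient f 0)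
      rw [sub_add_cancel] at h5
      linarith
    have h6 : (0:ℝ) ≤ ‖gradient f 0‖ + L * ‖θ k ω‖ := by positivity
    calc ‖G k ω‖ ≤ ‖gradient f 0‖ + L * ‖θ k ω‖ := h4
      _ ≤ ‖‖gradient f 0‖ + L * ‖θ k ω‖‖ := le_abs_self _
  have hgint : ∀ k, Integrable (g k) μ := fun k => (hgmem k).integrable one_le_two
  have hGint : ∀ k, Integrable (G k) μ := fun k => (hGmem k).integrable one_le_two
  set A : ℕ → ℝ := fun k => ∫ ω, ‖gradient f (θ k ω)‖ ^ 2 ∂μ with hA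
  have hAG : ∀ k, A k = ∫ ω, ‖G k ω‖ ^ 2 ∂μ := fun k => rfl
  have hAnn : ∀ k, 0 ≤ A k := fun k => integral_nonneg fun ω => by positivity
  -- conditional expectation of the noise is zero
  have hcond0 : ∀ k, μ[fun ω => g k ω - G k ω|ℱ k] =ᵐ[μ] 0 := by
    intro k
    have h1 : μ[g k - G k|ℱ k] =ᵐ[μ] μ[g k|ℱ k] - μ[G k|ℱ k] :=
      condExp_sub (hgint k) (hGint k) _
    have h2 : μ[G k|ℱ k] = G k :=
      condExp_of_stronglyMeasurable (hm k) (hGFmeas k) (hGint k)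
    have h3 : μ[g k|ℱ k] =ᵐ[μ] G k := hmean k
    filter_upwards [h1, h3] with ω hω1 hω3
    have : (fun ω => g k ω - G k ω) = g k - G k := rfl
    rw [this, hω1]
    simp [h2, hω3]
  have hcross : ∀ k, ∫ ω, ⟪G k ω, g k ω - G k ω⟫ ∂μ = 0 := fun k =>
    sgd_orth (hm k) μ (hGmem k) ((hGFmeas k).aestronglyMeasurable)
      ((hgmem k).sub (hGmem k)) (hcond0 k)
  have hinnerGg : ∀ k, ∫ ω, ⟪G k ω, g k ω⟫ ∂μ = A k := by
    intro k
    have hpt : ∀ ω, ⟪G k ω, g k ω⟫ = ‖G k ω‖ ^ 2 + ⟪G k ω, g k ω - G k ω⟫ := by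
      intro ω
      rw [inner_sub_right, real_inner_self_eq_norm_sq]; ring
    rw [hAG k]
    calc ∫ ω, ⟪G k ω, g k ω⟫ ∂μ
        = ∫ ω, (‖G k ω‖ ^ 2 + ⟪G k ω, g k ω - G k ω⟫) ∂μ := by simp_rw [hpt]
      _ = (∫ ω, ‖G k ω‖ ^ 2 ∂μ) + ∫ ω, ⟪G k ω, g k ω - G k ω⟫ ∂μ :=
          integral_add (memLp_integrable_sq (hGmem k))
            (memLp_integrable_inner (hGmem k) ((hgmem k).sub (hGmem k)))
      _ = ∫ ω, ‖G k ω‖ ^ 2 ∂μ := by rw [hcross k, add_zero]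
  -- variance bound
  have hB : ∀ k, ∫ ω, ‖g k ω - G k ω‖ ^ 2 ∂μ ≤ σ ^ 2 := by
    intro k
    have hint : Integrable (fun ω => ‖g k ω - G k ω‖ ^ 2) μ :=
      memLp_integrable_sq ((hgmem k).sub (hGmem k))
    have h1 : ∫ ω, ‖g k ω - G k ω‖ ^ 2 ∂μ
        = ∫ ω, (μ[fun ω' => ‖g k ω' - G k ω'‖ ^ 2|ℱ k]) ω ∂μ :=
      (integral_condExp (hm k)).symm
    rw [h1]
    calc ∫ ω, (μ[fun ω' => ‖g k ω' - G k ω'‖ ^ 2|ℱ k]) ω ∂μ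
        ≤ ∫ _, σ ^ 2 ∂μ := integral_mono_ae integrable_condExp (integrable_const _) (hvar k)
      _ = σ ^ 2 := by simp
  have hgsq : ∀ k, ∫ ω, ‖g k ω‖ ^ 2 ∂μ ≤ σ ^ 2 + A k := by
    intro k
    have hpt : ∀ ω, ‖g k ω‖ ^ 2
        = ‖G k ω‖ ^ 2 + 2 * ⟪G k ω, g k ω - G k ω⟫ + ‖g k ω - G k ω‖ ^ 2 := by
      intro ω
      have h := norm_add_sq_real (G k ω) (g k ω - G k ω)
      rw [add_sub_cancel] at h
      linarith
    have h2 : ∫ ω, ‖g k ω‖ ^ 2 ∂μ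
        = (∫ ω, ‖G k ω‖ ^ 2 ∂μ) + 2 * (∫ ω, ⟪G k ω, g k ω - G k ω⟫ ∂μ)
          + ∫ ω, ‖g k ω - G k ω‖ ^ 2 ∂μ := by
      have i1 : Integrable (fun ω => ‖G k ω‖ ^ 2) μ := memLp_integrable_sq (hGmem k)
      have i2 : Integrable (fun ω => 2 * ⟪G k ω, g k ω - G k ω⟫) μ :=
        (memLp_integrable_inner (hGmem k) ((hgmem k).sub (hGmem k))).const_mul 2
      have i3 : Integrable (fun ω => ‖g k ω - G k ω‖ ^ 2) μ :=
        memLp_integrable_sq ((hgmem k).sub (hGmem k))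
      have i12 : Integrable (fun ω => ‖G k ω‖ ^ 2 + 2 * ⟪G k ω, g k ω - G k ω⟫) μ :=
        i1.add i2
      simp_rw [hpt]
      rw [integral_add i12 i3, integral_add i1 i2, integral_const_mul]
    rw [h2, hcross k, ← hAG k]
    have := hB k
    linarith
  -- pointwise descent and telescoping
  have hstep : ∀ k ω, f (θ (k + 1) ω)
      ≤ f (θ k ω) - η * ⟪G k ω, g k ω⟫ + L * η ^ 2 / 2 * ‖g k ω‖ ^ 2 := by
    intro k ω
    have hd := sgd_descent_lemma f L hL0 hdiff hlip (θ k ω) (-(η • g k ω))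
    have he : θ (k + 1) ω = θ k ω + -(η • g k ω) := by
      rw [hupd k ω, sub_eq_add_neg]
    rw [← he] at hd
    have h1 : ⟪gradient f (θ k ω), -(η • g k ω)⟫ = -(η * ⟪G k ω, g k ω⟫) := by
      rw [inner_neg_right, inner_smul_right]
    have h2 : ‖-(η • g k ω)‖ ^ 2 = η ^ 2 * ‖g k ω‖ ^ 2 := by
      rw [norm_neg, norm_smul, mul_pow, Real.norm_eq_abs, sq_abs]
    rw [h1, h2] at hd
    linarith
  have htel : ∀ (K : ℕ) (ω : Ω), f (θ K ω) ≤ f θ₀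
      + ∑ k ∈ Finset.range K, (-(η * ⟪G k ω, g k ω⟫) + L * η ^ 2 / 2 * ‖g k ω‖ ^ 2) := by
    intro K ω
    induction K with
    | zero => simp [hθ0 ω]
    | succ K ih =>
        rw [Finset.sum_range_succ]
        have := hstep K ω
        linarith
  set C : ℝ := f θ₀ - fstar with hCdef
  have hC : 0 ≤ C := sub_nonneg.2 (hbelow θ₀)
  have hptsum : ∀ (K : ℕ) (ω : Ω), ∑ k ∈ Finset.range K, η * ⟪G k ω, g k ω⟫
      ≤ C + ∑ k ∈ Finset.range K, L * η ^ 2 / 2 * ‖g k ω‖ ^ 2 := by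
    intro K ω
    have h1 := htel K ω
    have h2 := hbelow (θ K ω)
    have h3 : ∑ k ∈ Finset.range K, (-(η * ⟪G k ω, g k ω⟫) + L * η ^ 2 / 2 * ‖g k ω‖ ^ 2)
        = -(∑ k ∈ Finset.range K, η * ⟪G k ω, g k ω⟫)
          + ∑ k ∈ Finset.range K, L * η ^ 2 / 2 * ‖g k ω‖ ^ 2 := by
      rw [Finset.sum_add_distrib, Finset.sum_neg_distrib]
    rw [h3] at h1
    simp only [hCdef]
    linarith
  -- integrate the telescoped inequality
  have hsumineq : ∀ K : ℕ, η * ∑ k ∈ Finset.range K, A k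
      ≤ C + L * η ^ 2 / 2 * ((K : ℝ) * σ ^ 2 + ∑ k ∈ Finset.range K, A k) := by
    intro K
    have hintk : ∀ k, Integrable (fun ω => η * ⟪G k ω, g k ω⟫) μ := fun k =>
      (memLp_integrable_inner (hGmem k) (hgmem k)).const_mul η
    have hintk2 : ∀ k, Integrable (fun ω => L * η ^ 2 / 2 * ‖g k ω‖ ^ 2) μ := fun k =>
      (memLp_integrable_sq (hgmem k)).const_mul _
    have hintL : Integrable (fun ω => ∑ k ∈ Finset.range K, η * ⟪G k ω, g k ω⟫) μ :=
      integrable_finset_sum _ fun k _ => hintk k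
    have hintR : Integrable
        (fun ω => C + ∑ k ∈ Finset.range K, L * η ^ 2 / 2 * ‖g k ω‖ ^ 2) μ :=
      (integrable_const C).add (integrable_finset_sum _ fun k _ => hintk2 k)
    have hmono := integral_mono hintL hintR (fun ω => hptsum K ω)
    rw [integral_finset_sum _ (fun k _ => hintk k),
      integral_add (integrable_const C) (integrable_finset_sum _ fun k _ => hintk2 k),
      integral_finset_sum _ (fun k _ => hintk2 k), integral_const] at hmono
    simp only [integral_const_mul, measure_univ, ENNReal.toReal_one, one_smul, probReal_univ] at hmono
    have hL1 : ∑ k ∈ Finset.range K, η * ∫ ω, ⟪G k ω, g k ω⟫ ∂μ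
        = η * ∑ k ∈ Finset.range K, A k := by
      rw [Finset.mul_sum]
      exact Finset.sum_congr rfl fun k _ => by rw [hinnerGg k]
    rw [hL1] at hmono
    have hR1 : ∑ k ∈ Finset.range K, L * η ^ 2 / 2 * ∫ ω, ‖g k ω‖ ^ 2 ∂μ
        ≤ L * η ^ 2 / 2 * ((K : ℝ) * σ ^ 2 + ∑ k ∈ Finset.range K, A k) := by
      have hc : (0:ℝ) ≤ L * η ^ 2 / 2 := by positivity
      calc ∑ k ∈ Finset.range K, L * η ^ 2 / 2 * ∫ ω, ‖g k ω‖ ^ 2 ∂μ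
          ≤ ∑ k ∈ Finset.range K, L * η ^ 2 / 2 * (σ ^ 2 + A k) :=
            Finset.sum_le_sum fun k _ => mul_le_mul_of_nonneg_left (hgsq k) hc
        _ = L * η ^ 2 / 2 * ((K : ℝ) * σ ^ 2 + ∑ k ∈ Finset.range K, A k) := by
            rw [← Finset.mul_sum, Finset.sum_add_distrib, Finset.sum_const,
              Finset.card_range]
            ring_nf
    linarith
  -- algebraic consequence
  have hηL1 : η * L ≤ 1 := by
    rw [le_div_iff₀ hL] at hηL
    exact hηL
  have hsum2 : ∀ K : ℕ, ∑ k ∈ Finset.range K, A k ≤ 2 * C / η + (K : ℝ) * (η * L * σ ^ 2) := by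
    intro K
    have h := hsumineq K
    have hσ2 : (0:ℝ) ≤ σ ^ 2 := sq_nonneg σ
    have hSnn : (0:ℝ) ≤ ∑ k ∈ Finset.range K, A k := Finset.sum_nonneg fun k _ => hAnn k
    have hKnn : (0:ℝ) ≤ (K : ℝ) := Nat.cast_nonneg K
    have key : η / 2 * ∑ k ∈ Finset.range K, A k
        ≤ C + (K : ℝ) * (L * η ^ 2 / 2 * σ ^ 2) := by
      nlinarith [mul_nonneg (mul_nonneg hη.le (sub_nonneg.2 hηL1)) hSnn]
    have hhalf : (0:ℝ) < η / 2 := by linarith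
    have hRHS : η / 2 * (2 * C / η + (K : ℝ) * (η * L * σ ^ 2))
        = C + (K : ℝ) * (L * η ^ 2 / 2 * σ ^ 2) := by
      field_simp
    have := key.trans_eq hRHS.symm
    exact le_of_mul_le_mul_left this hhalf
  -- bound on the running minimum
  set s : ℕ → ℝ := fun K => sInf ((fun k => A k) '' Set.Iio K) with hs
  have hsnn : ∀ K, 0 ≤ s K := fun K =>
    Real.sInf_nonneg (by rintro x ⟨k, -, rfl⟩; exact hAnn k)
  have hsK : ∀ K : ℕ, 1 ≤ K → s K ≤ 2 * C / η * (1 / (K : ℝ)) + η * L * σ ^ 2 := by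
    intro K hK
    have hKpos : (0:ℝ) < (K : ℝ) := by exact_mod_cast hK
    have hbdd : BddBelow ((fun k => A k) '' Set.Iio K) :=
      ⟨0, by rintro x ⟨k, -, rfl⟩; exact hAnn k⟩
    have hle : ∀ k, k < K → s K ≤ A k := fun k hk => csInf_le hbdd ⟨k, hk, rfl⟩
    have hKs : (K : ℝ) * s K ≤ ∑ k ∈ Finset.range K, A k := by
      calc (K : ℝ) * s K = ∑ _k ∈ Finset.range K, s K := by
            rw [Finset.sum_const, Finset.card_range, nsmul_eq_mul]
        _ ≤ ∑ k ∈ Finset.range K, A k :=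
            Finset.sum_le_sum fun k hk => hle k (Finset.mem_range.mp hk)
    have h2 := (hKs.trans (hsum2 K))
    have h3 : 2 * C / η + (K : ℝ) * (η * L * σ ^ 2)
        = (K : ℝ) * (2 * C / η * (1 / (K : ℝ)) + η * L * σ ^ 2) := by
      field_simp
    rw [h3] at h2
    exact le_of_mul_le_mul_left h2 hKpos
  -- conclude via limsup
  have hcob : Filter.IsCoboundedUnder (· ≤ ·) Filter.atTop s := by
    refine Filter.IsBoundedUnder.isCoboundedUnder_le ?_
    exact Filter.isBoundedUnder_of ⟨0, fun K => hsnn K⟩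
  refine le_of_forall_pos_le_add fun ε hε => ?_
  refine Filter.limsup_le_of_le hcob ?_
  have htend : Filter.Tendsto (fun K : ℕ => 2 * C / η * (1 / (K : ℝ)))
      Filter.atTop (nhds 0) := by
    have h0 := tendsto_one_div_atTop_nhds_zero_nat (𝕜 := ℝ)
    simpa using h0.const_mul (2 * C / η)
  have hev : ∀ᶠ K : ℕ in Filter.atTop, 2 * C / η * (1 / (K : ℝ)) < ε :=
    htend.eventually_lt_const hε
  filter_upwards [hev, Filter.eventually_ge_atTop 1] with K h1 h2
  have h3 := hsK K h2
  linarith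
end

section
/- For every n ≥ 1, the softmax map on ℝⁿ defined by softmax(x)_i = exp(x_i) / Σ_{j} exp(x_j) is 1-Lipschitz with respect to the Euclidean norm: ‖softmax(x) − softmax(y)‖₂ ≤ ‖x − y‖₂ for all x, y ∈ ℝⁿ. -/
/-- The softmax map on `ℝⁿ`. -/
noncomputable def softmax {n : ℕ} (x : EuclideanSpace ℝ (Fin n)) :
    EuclideanSpace ℝ (Fin n) :=
  WithLp.toLp 2 (fun i => Real.exp (x i) / ∑ j, Real.exp (x j))

namespace SoftmaxAux

open ContinuousLinearMap Finset

variable {n : ℕ}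

/-- The partition function. -/
noncomputable def S (x : Fin n → ℝ) : ℝ := ∑ j, Real.exp (x j)

/-- Derivative of the partition function. -/
noncomputable def S' (x : Fin n → ℝ) : (Fin n → ℝ) →L[ℝ] ℝ :=
  ∑ j, Real.exp (x j) • ContinuousLinearMap.proj j

/-- Derivative of the `i`-th component of softmax. -/
noncomputable def Dcomp (x : Fin n → ℝ) (i : Fin n) : (Fin n → ℝ) →L[ℝ] ℝ :=
  Real.exp (x i) • -((S x ^ 2)⁻¹ • S' x) +
    (S x)⁻¹ • (Real.exp (x i) • ContinuousLinearMap.proj i)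

/-- Derivative of softmax (as a map on the plain pi type). -/
noncomputable def B (x : Fin n → ℝ) : (Fin n → ℝ) →L[ℝ] (Fin n → ℝ) :=
  ContinuousLinearMap.pi (Dcomp x)

lemma S_pos (hn : 1 ≤ n) (x : Fin n → ℝ) : 0 < S x := by
  exact Finset.sum_pos (fun j _ => Real.exp_pos _) ⟨⟨0, hn⟩, Finset.mem_univ _⟩

lemma hasFDerivAt_proj (j : Fin n) (x : Fin n → ℝ) :
    HasFDerivAt (fun y : Fin n → ℝ => y j)
      (ContinuousLinearMap.proj j : (Fin n → ℝ) →L[ℝ] ℝ) x :=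
  (ContinuousLinearMap.proj (R := ℝ) (φ := fun _ : Fin n => ℝ) j).hasFDerivAt

lemma hasFDerivAt_S (x : Fin n → ℝ) : HasFDerivAt S (S' x) x := by
  unfold S S'
  exact HasFDerivAt.fun_sum fun j _ => (hasFDerivAt_proj j x).exp

lemma hasFDerivAt_softmax (hn : 1 ≤ n) (x : Fin n → ℝ) :
    HasFDerivAt (fun y : Fin n → ℝ => (fun i => Real.exp (y i) / S y : Fin n → ℝ))
      (B x) x := by
  apply hasFDerivAt_pi''
  intro i
  have hS := hasFDerivAt_S x
  have hS0 : S x ≠ 0 := (S_pos hn x).ne'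
  have hinv : HasFDerivAt (fun y : Fin n → ℝ => (S y)⁻¹)
      (-((S x ^ 2)⁻¹ • S' x)) x := by
    have := (hasDerivAt_inv hS0).comp_hasFDerivAt x hS
    simpa [Function.comp_def, neg_smul] using this
  have hexp : HasFDerivAt (fun y : Fin n → ℝ => Real.exp (y i))
      (Real.exp (x i) • ContinuousLinearMap.proj i) x :=
    (hasFDerivAt_proj i x).exp
  have := hexp.mul hinv
  simp only [div_eq_mul_inv]
  convert this using 2 <;> rfl

lemma apply_B (x v : Fin n → ℝ) (i : Fin n) :
    B x v i = Real.exp (x i) / S x * v i -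
      Real.exp (x i) / S x * ∑ j, Real.exp (x j) / S x * v j := by
  have h1 : B x v i = Real.exp (x i) * -((S x ^ 2)⁻¹ * ∑ j, Real.exp (x j) * v j)
      + (S x)⁻¹ * (Real.exp (x i) * v i) := by
    simp [B, Dcomp, S', ContinuousLinearMap.sum_apply, Finset.sum_apply]
  rw [h1, Finset.mul_sum, Finset.mul_sum]
  rw [mul_neg, Finset.mul_sum, ← Finset.sum_neg_distrib, sub_eq_add_neg,
    ← Finset.sum_neg_distrib, add_comm (Real.exp (x i) / S x * v i)]
  congr 1
  · apply Finset.sum_congr rfl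
    intro j _
    rw [sq, mul_inv]
    ring
  · ring

/-- key quadratic estimate. -/
lemma sum_sq_le (p v : Fin n → ℝ) (hp0 : ∀ i, 0 ≤ p i) (hp1 : ∑ i, p i = 1) :
    ∑ i, (p i * v i - p i * ∑ j, p j * v j) ^ 2 ≤ ∑ i, v i ^ 2 := by
  set m := ∑ j, p j * v j with hm
  have hple : ∀ i, p i ≤ 1 := by
    intro i
    rw [← hp1]
    exact Finset.single_le_sum (fun j _ => hp0 j) (Finset.mem_univ i)
  have h1 : ∀ i, (p i * v i - p i * m) ^ 2 ≤ p i * (v i - m) ^ 2 := by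
    intro i
    have : (p i * v i - p i * m) ^ 2 = p i ^ 2 * (v i - m) ^ 2 := by ring
    rw [this]
    have : p i ^ 2 ≤ p i := by nlinarith [hp0 i, hple i]
    nlinarith [sq_nonneg (v i - m)]
  calc ∑ i, (p i * v i - p i * m) ^ 2 ≤ ∑ i, p i * (v i - m) ^ 2 :=
        Finset.sum_le_sum fun i _ => h1 i
    _ = ∑ i, p i * v i ^ 2 - m ^ 2 := by
        have : ∀ i, p i * (v i - m) ^ 2 =
            p i * v i ^ 2 - 2 * m * (p i * v i) + m ^ 2 * p i := by
          intro i; ring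
        simp only [this, Finset.sum_add_distrib, Finset.sum_sub_distrib,
          ← Finset.mul_sum, ← hm, hp1]
        ring
    _ ≤ ∑ i, p i * v i ^ 2 := by nlinarith [sq_nonneg m]
    _ ≤ ∑ i, v i ^ 2 := by
        apply Finset.sum_le_sum
        intro i _
        nlinarith [hp0 i, hple i, sq_nonneg (v i)]

end SoftmaxAux

/-- Softmax is `1`-Lipschitz with respect to the Euclidean norm. -/
theorem softmax_one_lipschitz (n : ℕ) (hn : 1 ≤ n)
    (x y : EuclideanSpace ℝ (Fin n)) :
    ‖softmax x - softmax y‖ ≤ ‖x - y‖ := by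
  open SoftmaxAux in
  classical
  let φ : EuclideanSpace ℝ (Fin n) ≃L[ℝ] (Fin n → ℝ) := PiLp.continuousLinearEquiv 2 ℝ (fun _ : Fin n => ℝ)
  -- derivative of softmax as a map on E
  let A : EuclideanSpace ℝ (Fin n) →
      (EuclideanSpace ℝ (Fin n) →L[ℝ] EuclideanSpace ℝ (Fin n)) := fun z =>
    ((φ.symm : (Fin n → ℝ) →L[ℝ] EuclideanSpace ℝ (Fin n)).comp
      (SoftmaxAux.B (φ z))).comp (φ : EuclideanSpace ℝ (Fin n) →L[ℝ] (Fin n → ℝ))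
  have hderiv : ∀ z : EuclideanSpace ℝ (Fin n), HasFDerivAt softmax (A z) z := by
    intro z
    have h1 : HasFDerivAt (fun y : Fin n → ℝ =>
        (fun i => Real.exp (y i) / SoftmaxAux.S y : Fin n → ℝ))
        (SoftmaxAux.B (φ z)) (φ z) := SoftmaxAux.hasFDerivAt_softmax hn (φ z)
    have h2 := ((φ.symm.hasFDerivAt.comp _ (h1.comp _ φ.hasFDerivAt)))
    convert h2 using 1 <;> rfl
  have hbound : ∀ z : EuclideanSpace ℝ (Fin n), ‖A z‖ ≤ 1 := by
    intro z
    apply ContinuousLinearMap.opNorm_le_bound _ zero_le_one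
    intro v
    rw [one_mul]
    set p : Fin n → ℝ := fun i => Real.exp (φ z i) / SoftmaxAux.S (φ z) with hp
    have hS0 := SoftmaxAux.S_pos hn (φ z)
    have hcoord : ∀ i, (A z v) i = p i * v i - p i * ∑ j, p j * v j := by
      intro i
      show SoftmaxAux.B (φ z) (φ v) i = _
      rw [SoftmaxAux.apply_B]
      rfl
    rw [EuclideanSpace.norm_eq, EuclideanSpace.norm_eq]
    apply Real.sqrt_le_sqrt
    calc ∑ i, ‖(A z v) i‖ ^ 2 = ∑ i, (p i * v i - p i * ∑ j, p j * v j) ^ 2 := by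
          simp only [Real.norm_eq_abs, sq_abs]
          exact Finset.sum_congr rfl fun i _ => by rw [hcoord]
      _ ≤ ∑ i, (v i) ^ 2 := by
          apply SoftmaxAux.sum_sq_le
          · intro i
            exact div_nonneg (Real.exp_pos _).le hS0.le
          · rw [← Finset.sum_div, div_eq_one_iff_eq hS0.ne']
            rfl
      _ = ∑ i, ‖v i‖ ^ 2 := by simp [Real.norm_eq_abs, sq_abs]
  have := Convex.norm_image_sub_le_of_norm_hasFDerivWithin_le
    (f := softmax) (f' := A) (C := 1) (s := Set.univ)
    (fun z _ => (hderiv z).hasFDerivWithinAt) (fun z _ => hbound z)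
    convex_univ (Set.mem_univ y) (Set.mem_univ x)
  simpa using this
end

section
/- Let (Z, μ) be a probability space (the data distribution), (H, P) a measurable space of hypotheses with prior probability measure P, and ℓ : H × Z → ℝ a jointly measurable loss with 0 ≤ ℓ(h,z) ≤ 1. For h ∈ H let R(h) = ∫ ℓ(h,z) dμ(z) be the true risk, and for a sample S = (z₁,…,z_m) ∈ Z^m let R̂(h,S) = (1/m)·Σ_{i=1}^m ℓ(h,z_i) be the empirical risk. Then for every δ ∈ (0,1), with μ^{⊗m}-probability at least 1 − δ over the draw of S, the following holds simultaneously for every probability measure Q on H with finite KL(Q‖P): E_{h∼Q}[R(h)] ≤ E_{h∼Q}[R̂(h,S)] + √((KL(Q‖P) + ln(2m/δ)) / (2m)). -/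
open MeasureTheory


lemma hasDerivF (θ : ℝ) {t : ℝ} (ht0 : 0 < t) (ht1 : t < 1) :
    HasDerivAt (fun t : ℝ => θ * Real.log θ + (1-θ) * Real.log (1-θ)
      - θ * Real.log t - (1-θ) * Real.log (1-t) - 2*(θ-t)^2)
      ((t-θ)*(1-2*t)^2/(t*(1-t))) t := by
  have h1 : HasDerivAt (fun t : ℝ => Real.log t) t⁻¹ t := Real.hasDerivAt_log ht0.ne'
  have h2 : HasDerivAt (fun t : ℝ => Real.log (1-t)) (-1/(1-t)) t := by
    have : (1:ℝ) - id t ≠ 0 := by simp; intro h; nlinarith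
    simpa using ((hasDerivAt_id t).const_sub 1).log this
  have h3 : HasDerivAt (fun t : ℝ => 2*(θ-t)^2) (2*((2:ℕ)*(θ-t)^(2-1)*(0-1))) t := by
    simpa using (((hasDerivAt_const t θ).sub (hasDerivAt_id t)).pow 2).const_mul 2
  have h4 : HasDerivAt (fun t : ℝ => θ * Real.log θ + (1-θ) * Real.log (1-θ)
      - θ * Real.log t - (1-θ) * Real.log (1-t) - 2*(θ-t)^2)
      (0 - θ * t⁻¹ - (1-θ) * (-1/(1-t)) - 2*((2:ℕ)*(θ-t)^(2-1)*(0-1))) t := by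
    exact ((((hasDerivAt_const t (θ * Real.log θ + (1-θ) * Real.log (1-θ))).sub
      (h1.const_mul θ)).sub (h2.const_mul (1-θ))).sub h3)
  have ht : t ≠ 0 := ht0.ne'
  have ht' : (1:ℝ) - t ≠ 0 := by linarith
  have he : (t-θ)*(1-2*t)^2/(t*(1-t))
      = 0 - θ * t⁻¹ - (1-θ) * (-1/(1-t)) - 2*((2:ℕ)*(θ-t)^(2-1)*(0-1)) := by
    field_simp
    ring
  rw [he]; exact h4

lemma neg_log_one_sub {p : ℝ} (hp0 : 0 ≤ p) (hp1 : p < 1) :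
    Real.log (1-p) + 2*p^2 ≤ 0 := by
  set G : ℝ → ℝ := fun t => -Real.log (1-t) - 2*t^2 with hG
  have key : ∀ t ∈ Set.Ico (0:ℝ) 1, HasDerivAt G (1/(1-t) - 4*t) t := by
    intro t ht
    have h2 : HasDerivAt (fun t : ℝ => Real.log (1-t)) (-1/(1-t)) t := by
      have : (1:ℝ) - id t ≠ 0 := by simp; intro h; nlinarith [ht.2]
      simpa using ((hasDerivAt_id t).const_sub 1).log this
    have h3 : HasDerivAt (fun t : ℝ => 2*t^2) (2*((2:ℕ)*t^(2-1)*1)) t := by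
      simpa using ((hasDerivAt_id t).pow 2).const_mul 2
    have := (h2.neg).sub h3
    rw [show (1/(1-t) - 4*t) = -(-1/(1-t)) - 2*((2:ℕ)*t^(2-1)*1) by ring]
    exact this
  have hmono : MonotoneOn G (Set.Icc 0 p) := by
    apply monotoneOn_of_deriv_nonneg (convex_Icc 0 p)
    · intro t ht
      exact ((key t ⟨ht.1, lt_of_le_of_lt ht.2 hp1⟩).continuousAt).continuousWithinAt
    · intro t ht
      rw [interior_Icc] at ht
      exact ((key t ⟨le_of_lt ht.1, lt_of_le_of_lt (le_of_lt ht.2) hp1⟩).differentiableAt).differentiableWithinAt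
    · intro t ht
      rw [interior_Icc] at ht
      have h1t : 0 < 1 - t := by nlinarith [ht.2]
      rw [(key t ⟨le_of_lt ht.1, by nlinarith [ht.2]⟩).deriv]
      have : 1/(1-t) - 4*t = (1-2*t)^2/(1-t) := by field_simp; ring
      rw [this]
      positivity
  have h0 : G 0 = 0 := by simp [hG]
  have := hmono (Set.left_mem_Icc.2 hp0) (Set.right_mem_Icc.2 hp0) hp0
  rw [h0] at this
  simp only [hG] at this
  linarith

lemma pinsker {θ p : ℝ} (hθ : θ ∈ Set.Icc (0:ℝ) 1) (hp : p ∈ Set.Ioo (0:ℝ) 1) :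
    θ * Real.log p + (1-θ) * Real.log (1-p) + 2*(θ-p)^2
      ≤ θ * Real.log θ + (1-θ) * Real.log (1-θ) := by
  obtain ⟨hp0, hp1⟩ := hp
  rcases eq_or_lt_of_le hθ.1 with h0 | hθ0
  · -- θ = 0
    have := neg_log_one_sub (le_of_lt hp0) hp1
    rw [← h0]
    norm_num
    nlinarith
  rcases eq_or_lt_of_le hθ.2 with h1 | hθ1
  · -- θ = 1
    have := neg_log_one_sub (p := 1 - p) (by linarith) (by linarith)
    rw [h1]
    norm_num
    have hsimp : (1:ℝ) - (1-p) = p := by ring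
    rw [hsimp] at this
    nlinarith
  · -- θ ∈ (0,1)
    set F : ℝ → ℝ := fun t => θ * Real.log θ + (1-θ) * Real.log (1-θ)
      - θ * Real.log t - (1-θ) * Real.log (1-t) - 2*(θ-t)^2 with hF
    have hFθ : F θ = 0 := by simp [hF]
    have hkey : ∀ t ∈ Set.Ioo (0:ℝ) 1, HasDerivAt F ((t-θ)*(1-2*t)^2/(t*(1-t))) t :=
      fun t ht => hasDerivF θ ht.1 ht.2
    have hFp : 0 ≤ F p := by
      rcases le_total θ p with hle | hle
      · have hmono : MonotoneOn F (Set.Icc θ p) := by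
          apply monotoneOn_of_deriv_nonneg (convex_Icc θ p)
          · intro t ht
            exact ((hkey t ⟨lt_of_lt_of_le hθ0 ht.1, lt_of_le_of_lt ht.2 hp1⟩).continuousAt).continuousWithinAt
          · intro t ht
            rw [interior_Icc] at ht
            exact ((hkey t ⟨lt_trans hθ0 ht.1, lt_trans ht.2 hp1⟩).differentiableAt).differentiableWithinAt
          · intro t ht
            rw [interior_Icc] at ht
            have h1 : (0:ℝ) < t := lt_trans hθ0 ht.1
            have h2 : t < 1 := lt_trans ht.2 hp1
            rw [(hkey t ⟨h1, h2⟩).deriv]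
            have hd : 0 < t*(1-t) := by nlinarith
            have hn : 0 ≤ (t-θ)*(1-2*t)^2 := by nlinarith [sq_nonneg (1-2*t), ht.1]
            positivity
        have := hmono (Set.left_mem_Icc.2 hle) (Set.right_mem_Icc.2 hle) hle
        rw [hFθ] at this; exact this
      · have hanti : AntitoneOn F (Set.Icc p θ) := by
          apply antitoneOn_of_deriv_nonpos (convex_Icc p θ)
          · intro t ht
            exact ((hkey t ⟨lt_of_lt_of_le hp0 ht.1, lt_of_le_of_lt ht.2 hθ1⟩).continuousAt).continuousWithinAt
          · intro t ht
            rw [interior_Icc] at ht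
            exact ((hkey t ⟨lt_trans hp0 ht.1, lt_trans ht.2 hθ1⟩).differentiableAt).differentiableWithinAt
          · intro t ht
            rw [interior_Icc] at ht
            have h1 : (0:ℝ) < t := lt_trans hp0 ht.1
            have h2 : t < 1 := lt_trans ht.2 hθ1
            rw [(hkey t ⟨h1, h2⟩).deriv]
            have hd : 0 < t*(1-t) := by nlinarith
            have hn : (t-θ)*(1-2*t)^2 ≤ 0 := by nlinarith [sq_nonneg (1-2*t), ht.2]
            exact div_nonpos_of_nonpos_of_nonneg hn (le_of_lt hd)
        have := hanti (Set.left_mem_Icc.2 hle) (Set.right_mem_Icc.2 hle) hle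
        rw [hFθ] at this; exact this
    simp only [hF] at hFp
    linarith

lemma pow_eq_exp_log {x : ℝ} {n : ℕ} (h : 0 < x ∨ n = 0) :
    x^n = Real.exp (n * Real.log x) := by
  rcases h with h | h
  · rw [← Real.log_pow, Real.exp_log (pow_pos h n)]
  · simp [h]

lemma pmf_le_one {m k : ℕ} (hk : k ≤ m) {θ : ℝ} (hθ0 : 0 ≤ θ) (hθ1 : θ ≤ 1) :
    (m.choose k : ℝ) * (θ^k * (1-θ)^(m-k)) ≤ 1 := by
  have hexp : ((θ + (1-θ))^m : ℝ) = 1 := by norm_num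
  rw [add_pow] at hexp
  calc (m.choose k : ℝ) * (θ^k * (1-θ)^(m-k))
      = θ^k * (1-θ)^(m-k) * (m.choose k : ℝ) := by ring
    _ ≤ ∑ j ∈ Finset.range (m+1), θ^j * (1-θ)^(m-j) * (m.choose j : ℝ) := by
        apply Finset.single_le_sum (f := fun j => θ^j * (1-θ)^(m-j) * (m.choose j : ℝ))
        · intro j _
          have h1 : (0:ℝ) ≤ 1 - θ := by linarith
          positivity
        · exact Finset.mem_range.2 (Nat.lt_succ_of_le hk)
    _ = 1 := hexp

lemma term_bound {m k : ℕ} (hm : 1 ≤ m) (hk : k ≤ m) {p : ℝ}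
    (hp0 : 0 ≤ p) (hp1 : p ≤ 1) :
    (m.choose k : ℝ) * (p^k * (1-p)^(m-k)) * Real.exp (2*m*((k:ℝ)/m - p)^2) ≤ 1 := by
  have hm0 : (0:ℝ) < m := by exact_mod_cast hm
  set θ : ℝ := (k:ℝ)/m with hθdef
  have hθ0 : 0 ≤ θ := by positivity
  have hθ1 : θ ≤ 1 := by
    rw [hθdef, div_le_one hm0]; exact_mod_cast hk
  rcases eq_or_lt_of_le hp0 with h0 | hp0'
  · -- p = 0
    obtain rfl : p = 0 := h0.symm
    rcases Nat.eq_zero_or_pos k with hk0 | hk0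
    · subst hk0
      simp [hθdef]
    · rw [zero_pow hk0.ne']
      norm_num
  rcases eq_or_lt_of_le hp1 with h1 | hp1'
  · -- p = 1
    obtain rfl : p = 1 := h1
    rcases Nat.eq_or_lt_of_le hk with hkm | hkm
    · subst hkm
      have : θ = 1 := by rw [hθdef]; field_simp
      simp [this, Nat.sub_self]
    · have : m - k ≠ 0 := Nat.sub_ne_zero_of_lt hkm
      rw [show (1:ℝ) - 1 = 0 by ring, zero_pow this]
      norm_num
  · -- 0 < p < 1
    have hpk := pinsker ⟨hθ0, hθ1⟩ ⟨hp0', hp1'⟩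
    have hmul := mul_le_mul_of_nonneg_left hpk (le_of_lt hm0)
    have hmθ : (m:ℝ) * θ = k := by rw [hθdef]; field_simp
    have hmθ' : (m:ℝ) * (1-θ) = ((m-k : ℕ) : ℝ) := by
      rw [hθdef, Nat.cast_sub hk]; field_simp
    have lhs_eq : p^k * (1-p)^(m-k) * Real.exp (2*m*(θ - p)^2)
        = Real.exp ((m:ℝ) * (θ * Real.log p + (1-θ) * Real.log (1-p) + 2*(θ-p)^2)) := by
      rw [pow_eq_exp_log (Or.inl hp0'), pow_eq_exp_log (Or.inl (by linarith : (0:ℝ) < 1 - p)),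
        ← Real.exp_add, ← Real.exp_add]
      congr 1
      rw [mul_add, mul_add, ← mul_assoc, ← mul_assoc, hmθ, hmθ']
      ring
    have rhs_eq : Real.exp ((m:ℝ) * (θ * Real.log θ + (1-θ) * Real.log (1-θ)))
        = θ^k * (1-θ)^(m-k) := by
      rw [pow_eq_exp_log, pow_eq_exp_log, ← Real.exp_add]
      · congr 1
        rw [mul_add, ← mul_assoc, ← mul_assoc, hmθ, hmθ']
      · rcases Nat.eq_or_lt_of_le hk with h | h
        · right; simp [h]
        · left; simp only [hθdef, sub_pos]; rw [div_lt_one hm0]; exact_mod_cast h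
      · rcases Nat.eq_zero_or_pos k with h | h
        · right; simp [h]
        · left
          rw [hθdef]
          exact div_pos (by exact_mod_cast h) hm0
    calc (m.choose k : ℝ) * (p^k * (1-p)^(m-k)) * Real.exp (2*m*(θ - p)^2)
        = (m.choose k : ℝ) * (p^k * (1-p)^(m-k) * Real.exp (2*m*(θ - p)^2)) := by ring
      _ ≤ (m.choose k : ℝ) * (θ^k * (1-θ)^(m-k)) := by
          apply mul_le_mul_of_nonneg_left _ (by positivity)
          rw [lhs_eq, ← rhs_eq]
          exact Real.exp_le_exp.2 hmul
      _ ≤ 1 := pmf_le_one hk hθ0 hθ1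

lemma convexOn_shift {f : ℝ → ℝ} (hf : ConvexOn ℝ Set.univ f) :
    ConvexOn ℝ Set.univ (fun t => f (t + 1)) := by
  refine ⟨convex_univ, fun x _ y _ a b ha hb hab => ?_⟩
  have h := hf.2 (Set.mem_univ (x+1)) (Set.mem_univ (y+1)) ha hb hab
  have h2 : a • (x+1) + b • (y+1) = (a • x + b • y) + 1 := by
    simp only [smul_eq_mul]; nlinarith
  rw [h2] at h
  simpa using h

lemma chord {ι : Type*} [DecidableEq ι] (s : Finset ι) :
    ∀ (f : ℝ → ℝ), ConvexOn ℝ Set.univ f → ∀ (x : ι → ℝ), (∀ i ∈ s, x i ∈ Set.Icc (0:ℝ) 1) →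
    f (∑ i ∈ s, x i) ≤
      ∑ A ∈ s.powerset, (∏ i ∈ A, x i) * (∏ i ∈ s \ A, (1 - x i)) * f A.card := by
  induction s using Finset.induction_on with
  | empty => intro f hf x hx; simp
  | insert _ _ ha =>
    rename_i a s IH
    intro f hf x hx
    have hxa := hx a (Finset.mem_insert_self a s)
    have hxs : ∀ i ∈ s, x i ∈ Set.Icc (0:ℝ) 1 :=
      fun i hi => hx i (Finset.mem_insert_of_mem hi)
    set S := ∑ i ∈ s, x i with hS
    have hsum : ∑ i ∈ insert a s, x i = x a + S := Finset.sum_insert ha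
    have hconv : f (x a + S) ≤ (1 - x a) * f S + x a * f (S + 1) := by
      have := hf.2 (Set.mem_univ S) (Set.mem_univ (S+1))
        (by linarith [hxa.2] : (0:ℝ) ≤ 1 - x a) hxa.1 (by ring)
      have he : (1 - x a) • S + x a • (S+1) = x a + S := by
        simp [smul_eq_mul]; ring
      rw [he] at this
      simpa [smul_eq_mul] using this
    have IH1 := IH f hf x hxs
    have IH2 := IH (fun t => f (t+1)) (convexOn_shift hf) x hxs
    rw [hsum, Finset.sum_powerset_insert ha]
    have e1 : ∀ A ∈ s.powerset,
        (∏ i ∈ A, x i) * (∏ i ∈ insert a s \ A, (1 - x i)) * f A.card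
          = (1 - x a) * ((∏ i ∈ A, x i) * (∏ i ∈ s \ A, (1 - x i)) * f A.card) := by
      intro A hA
      rw [Finset.mem_powerset] at hA
      have haA : a ∉ A := fun h => ha (hA h)
      have hset : insert a s \ A = insert a (s \ A) := by
        ext b; simp [Finset.mem_sdiff, Finset.mem_insert]
        constructor
        · rintro ⟨h1 | h1, h2⟩
          · exact Or.inl h1
          · exact Or.inr ⟨h1, h2⟩
        · rintro (rfl | ⟨h1, h2⟩)
          · exact ⟨Or.inl rfl, haA⟩
          · exact ⟨Or.inr h1, h2⟩
      rw [hset, Finset.prod_insert (fun h => ha (Finset.mem_sdiff.1 h).1)]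
      ring
    have e2 : ∀ A ∈ s.powerset,
        (∏ i ∈ insert a A, x i) * (∏ i ∈ insert a s \ insert a A, (1 - x i)) * f (insert a A).card
          = x a * ((∏ i ∈ A, x i) * (∏ i ∈ s \ A, (1 - x i)) * f ((A.card : ℝ) + 1)) := by
      intro A hA
      rw [Finset.mem_powerset] at hA
      have haA : a ∉ A := fun h => ha (hA h)
      have hset : insert a s \ insert a A = s \ A := by
        ext b
        simp only [Finset.mem_sdiff, Finset.mem_insert]
        constructor
        · rintro ⟨h1 | h1, h2⟩
          · exact absurd (Or.inl h1) h2
          · exact ⟨h1, fun hbA => h2 (Or.inr hbA)⟩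
        · rintro ⟨h1, h2⟩
          refine ⟨Or.inr h1, ?_⟩
          rintro (rfl | h3)
          · exact ha h1
          · exact h2 h3
      rw [hset, Finset.prod_insert haA, Finset.card_insert_of_notMem haA]
      push_cast
      ring
    rw [Finset.sum_congr rfl e1, Finset.sum_congr rfl e2, ← Finset.mul_sum, ← Finset.mul_sum]
    calc f (x a + S) ≤ (1 - x a) * f S + x a * f (S + 1) := hconv
      _ ≤ _ := by
          apply add_le_add
          · exact mul_le_mul_of_nonneg_left IH1 (by linarith [hxa.2])
          · exact mul_le_mul_of_nonneg_left (by simpa using IH2) hxa.1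

lemma convexOn_exp_sq (c b : ℝ) (hc : 0 ≤ c) :
    ConvexOn ℝ Set.univ (fun t : ℝ => Real.exp (c * (t - b)^2)) := by
  have hg : ConvexOn ℝ Set.univ (fun t : ℝ => c * (t - b)^2) := by
    refine ⟨convex_univ, fun x _ y _ a a' ha ha' hab => ?_⟩
    simp only [smul_eq_mul]
    have ha2 : a' = 1 - a := by linarith
    subst ha2
    nlinarith [mul_nonneg (mul_nonneg hc (mul_nonneg ha (by linarith : (0:ℝ) ≤ 1 - a)))
      (sq_nonneg (x - y))]
  refine ⟨convex_univ, fun x hx y hy a a' ha ha' hab => ?_⟩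
  have h1 := hg.2 hx hy ha ha' hab
  simp only [smul_eq_mul] at h1 ⊢
  calc Real.exp (c * (a*x + a'*y - b)^2)
      ≤ Real.exp (a * (c*(x-b)^2) + a' * (c*(y-b)^2)) := Real.exp_le_exp.2 h1
    _ ≤ a * Real.exp (c*(x-b)^2) + a' * Real.exp (c*(y-b)^2) := by
        have := convexOn_exp.2 (Set.mem_univ (c*(x-b)^2)) (Set.mem_univ (c*(y-b)^2)) ha ha' hab
        simpa using this

set_option maxHeartbeats 1000000 in
lemma sample_exp_bound {Z : Type*} [MeasurableSpace Z] (μ : Measure Z) [IsProbabilityMeasure μ]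
    (X : Z → ℝ) (hX : Measurable X) (hXb : ∀ z, X z ∈ Set.Icc (0:ℝ) 1)
    (m : ℕ) (hm : 1 ≤ m) :
    ∫ S : Fin m → Z, Real.exp (2*m*((∫ z, X z ∂μ) - (m:ℝ)⁻¹ * ∑ i, X (S i))^2)
      ∂(Measure.pi fun _ : Fin m => μ) ≤ m + 1 := by
  letI : MeasureSpace Z := ⟨μ⟩
  have hμvol : μ = (volume : Measure Z) := rfl
  haveI : IsProbabilityMeasure (volume : Measure Z) := by rw [← hμvol]; infer_instance
  have hm0 : (0:ℝ) < m := by exact_mod_cast hm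
  set p : ℝ := ∫ z, X z ∂μ with hp
  have hp0 : 0 ≤ p := integral_nonneg (fun z => (hXb z).1)
  have hXint : Integrable X μ := Integrable.mono' (integrable_const 1)
    hX.aestronglyMeasurable (Filter.Eventually.of_forall fun z => by
      rw [Real.norm_eq_abs, abs_of_nonneg (hXb z).1]; exact (hXb z).2)
  have hp1 : p ≤ 1 := by
    have h := integral_mono hXint (integrable_const (1:ℝ)) (fun z => (hXb z).2)
    simpa using h
  set f : ℝ → ℝ := fun t => Real.exp ((2/(m:ℝ)) * (t - m*p)^2) with hf
  have hfconv : ConvexOn ℝ Set.univ f := convexOn_exp_sq _ _ (by positivity)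
  -- pointwise identity
  have hpt : ∀ S : Fin m → Z, Real.exp (2*m*(p - (m:ℝ)⁻¹ * ∑ i, X (S i))^2)
      = f (∑ i, X (S i)) := by
    intro S
    rw [hf]
    congr 1
    field_simp
    ring
  -- chord bound pointwise
  have hchord : ∀ S : Fin m → Z, f (∑ i, X (S i)) ≤
      ∑ A ∈ (Finset.univ : Finset (Fin m)).powerset,
        (∏ i ∈ A, X (S i)) * (∏ i ∈ Finset.univ \ A, (1 - X (S i))) * f A.card := by
    intro S
    exact chord Finset.univ f hfconv (fun i => X (S i)) (fun i _ => hXb (S i))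
  -- integrability of LHS
  have hsumMeas : Measurable fun S : Fin m → Z => ∑ i, X (S i) :=
    Finset.measurable_sum _ (fun i _ => hX.comp (measurable_pi_apply i))
  have hfMeas : Measurable f := by
    rw [hf]
    exact Real.measurable_exp.comp (by fun_prop)
  have hmeasL : Measurable fun S : Fin m → Z => f (∑ i, X (S i)) :=
    hfMeas.comp hsumMeas
  have hintL : Integrable (fun S : Fin m → Z => f (∑ i, X (S i)))
      (Measure.pi fun _ : Fin m => μ) := by
    refine Integrable.mono' (integrable_const (Real.exp (2*(m:ℝ)))) hmeasL.aestronglyMeasurable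
      (Filter.Eventually.of_forall fun S => ?_)
    rw [hf, Real.norm_eq_abs, abs_of_nonneg (Real.exp_pos _).le, Real.exp_le_exp]
    have h1 : 0 ≤ ∑ i, X (S i) := Finset.sum_nonneg fun i _ => (hXb (S i)).1
    have h2 : ∑ i, X (S i) ≤ m := by
      calc ∑ i, X (S i) ≤ ∑ _i : Fin m, (1:ℝ) := Finset.sum_le_sum fun i _ => (hXb (S i)).2
        _ = m := by simp
    have h3 : 0 ≤ m*p := by positivity
    have h4 : (m:ℝ)*p ≤ m := by nlinarith
    have : (∑ i, X (S i) - m*p)^2 ≤ (m:ℝ)^2 := by nlinarith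
    calc (2/(m:ℝ)) * (∑ i, X (S i) - m*p)^2 ≤ (2/(m:ℝ)) * (m:ℝ)^2 := by
          apply mul_le_mul_of_nonneg_left this (by positivity)
      _ = 2*(m:ℝ) := by rw [sq, ← mul_assoc, div_mul_cancel₀ 2 hm0.ne']
  -- integrability of each summand
  have hsummand_meas : ∀ A : Finset (Fin m), Measurable fun S : Fin m → Z =>
      (∏ i ∈ A, X (S i)) * (∏ i ∈ Finset.univ \ A, (1 - X (S i))) * f A.card := by
    intro A
    apply Measurable.mul
    apply Measurable.mul
    · exact Finset.measurable_prod _ (fun i _ => hX.comp (measurable_pi_apply i))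
    · exact Finset.measurable_prod _ (fun i _ =>
        (measurable_const.sub (hX.comp (measurable_pi_apply i))))
    · exact measurable_const
  have hsummand_int : ∀ A : Finset (Fin m), Integrable (fun S : Fin m → Z =>
      (∏ i ∈ A, X (S i)) * (∏ i ∈ Finset.univ \ A, (1 - X (S i))) * f A.card)
      (Measure.pi fun _ : Fin m => μ) := by
    intro A
    refine Integrable.mono' (integrable_const (f A.card)) (hsummand_meas A).aestronglyMeasurable
      (Filter.Eventually.of_forall fun S => ?_)
    have h1 : 0 ≤ ∏ i ∈ A, X (S i) := Finset.prod_nonneg fun i _ => (hXb (S i)).1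
    have h2 : ∏ i ∈ A, X (S i) ≤ 1 := Finset.prod_le_one (fun i _ => (hXb (S i)).1)
      (fun i _ => (hXb (S i)).2)
    have h3 : 0 ≤ ∏ i ∈ Finset.univ \ A, (1 - X (S i)) :=
      Finset.prod_nonneg fun i _ => by linarith [(hXb (S i)).2]
    have h4 : ∏ i ∈ Finset.univ \ A, (1 - X (S i)) ≤ 1 :=
      Finset.prod_le_one (fun i _ => by linarith [(hXb (S i)).2])
        (fun i _ => by linarith [(hXb (S i)).1])
    have h5 : (0:ℝ) < f A.card := Real.exp_pos _
    rw [Real.norm_eq_abs, abs_of_nonneg (by positivity)]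
    have h6 : (∏ i ∈ A, X (S i)) * (∏ i ∈ Finset.univ \ A, (1 - X (S i))) ≤ 1 :=
      mul_le_one₀ h2 h3 h4
    nlinarith
  -- integral of each summand
  have hsummand_val : ∀ A : Finset (Fin m), (∫ S : Fin m → Z,
      (∏ i ∈ A, X (S i)) * (∏ i ∈ Finset.univ \ A, (1 - X (S i))) * f A.card
      ∂(Measure.pi fun _ : Fin m => μ))
      = p^A.card * (1-p)^(m - A.card) * f A.card := by
    intro A
    rw [integral_mul_const]
    congr 1
    have hprod : ∀ S : Fin m → Z,
        (∏ i ∈ A, X (S i)) * (∏ i ∈ Finset.univ \ A, (1 - X (S i)))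
          = ∏ i : Fin m, (if i ∈ A then X (S i) else 1 - X (S i)) := by
      intro S
      rw [Finset.prod_ite]
      congr 1
      · apply Finset.prod_congr _ (fun i _ => rfl)
        ext i; simp
      · apply Finset.prod_congr _ (fun i _ => rfl)
        ext i; simp
    simp_rw [hprod]
    have := MeasureTheory.integral_fintype_prod_eq_prod (𝕜 := ℝ) (ι := Fin m) (μ := fun _ => (volume : Measure Z))
      (f := fun i (z : Z) => if i ∈ A then X z else 1 - X z)
    rw [show (Measure.pi fun _ : Fin m => μ) = Measure.pi (fun _ : Fin m => (volume : Measure Z)) from rfl]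
    rw [this]
    have hint1 : ∀ i : Fin m, (∫ z : Z, (if i ∈ A then X z else 1 - X z)) =
        if i ∈ A then p else 1 - p := by
      intro i
      by_cases h : i ∈ A
      · simp [h, hp, hμvol]
      · simp only [h, if_false]
        rw [integral_sub (integrable_const 1)]
        · simp [hp, hμvol]
        · exact hXint
    simp_rw [hint1]
    rw [Finset.prod_ite, Finset.prod_const, Finset.prod_const]
    congr 2
    · congr 1; ext i; simp
    · rw [show Finset.filter (fun i => i ∉ A) Finset.univ = Finset.univ \ A by ext i; simp]
      rw [Finset.card_sdiff_of_subset (Finset.subset_univ A), Finset.card_univ, Fintype.card_fin]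
  -- put together
  calc ∫ S : Fin m → Z, Real.exp (2*m*(p - (m:ℝ)⁻¹ * ∑ i, X (S i))^2)
        ∂(Measure.pi fun _ : Fin m => μ)
      = ∫ S : Fin m → Z, f (∑ i, X (S i)) ∂(Measure.pi fun _ : Fin m => μ) := by
        simp_rw [hpt]
    _ ≤ ∫ S : Fin m → Z, (∑ A ∈ (Finset.univ : Finset (Fin m)).powerset,
          (∏ i ∈ A, X (S i)) * (∏ i ∈ Finset.univ \ A, (1 - X (S i))) * f A.card)
          ∂(Measure.pi fun _ : Fin m => μ) := by
        apply integral_mono hintL (integrable_finset_sum _ (fun A _ => hsummand_int A))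
        exact hchord
    _ = ∑ A ∈ (Finset.univ : Finset (Fin m)).powerset,
          p^A.card * (1-p)^(m - A.card) * f A.card := by
        rw [integral_finset_sum _ (fun A _ => hsummand_int A)]
        exact Finset.sum_congr rfl fun A _ => hsummand_val A
    _ = ∑ k ∈ Finset.range (m+1), (m.choose k) • (p^k * (1-p)^(m-k) * f k) := by
        have := Finset.sum_powerset_apply_card (fun k : ℕ => p^k * (1-p)^(m-k) * f k)
          (x := (Finset.univ : Finset (Fin m)))
        rw [this, Finset.card_univ, Fintype.card_fin]
    _ ≤ ∑ _k ∈ Finset.range (m+1), (1:ℝ) := by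
        apply Finset.sum_le_sum
        intro k hk
        rw [Finset.mem_range, Nat.lt_succ_iff] at hk
        rw [nsmul_eq_mul, ← mul_assoc]
        have heq : f k = Real.exp (2*m*((k:ℝ)/m - p)^2) := by
          simp only [hf]
          congr 1
          field_simp
        rw [heq]
        exact term_bound hm hk hp0 hp1
    _ = m + 1 := by simp


lemma change_of_measure {H : Type*} [MeasurableSpace H] (P Q : Measure H)
    [IsProbabilityMeasure P] [IsProbabilityMeasure Q] (hQP : Q ≪ P)
    (hQint : Integrable (fun h => Real.log ((Q.rnDeriv P h).toReal)) Q)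
    (f : H → ℝ) (hf : Measurable f) (hf0 : ∀ h, 0 ≤ f h) (B : ℝ) (hfB : ∀ h, f h ≤ B) :
    ∫ h, f h ∂Q ≤ (∫ h, Real.log ((Q.rnDeriv P h).toReal) ∂Q)
      + Real.log (∫ h, Real.exp (f h) ∂P) := by
  have hfint : ∀ (ν : Measure H) [IsProbabilityMeasure ν], Integrable f ν := by
    intro ν _
    refine Integrable.mono' (integrable_const B) hf.aestronglyMeasurable
      (Filter.Eventually.of_forall fun h => ?_)
    rw [Real.norm_eq_abs, abs_of_nonneg (hf0 h)]; exact hfB h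
  have hexpint : Integrable (fun h => Real.exp (f h)) P := by
    refine Integrable.mono' (integrable_const (Real.exp B))
      (Real.measurable_exp.comp hf).aestronglyMeasurable
      (Filter.Eventually.of_forall fun h => ?_)
    rw [Real.norm_eq_abs, abs_of_nonneg (Real.exp_pos _).le, Real.exp_le_exp]; exact hfB h
  set D : ℝ := ∫ h, Real.exp (f h) ∂P with hD
  have hD1 : 1 ≤ D := by
    have := integral_mono (integrable_const 1) hexpint
      (fun h => Real.one_le_exp (hf0 h))
    simpa using this
  have hD0 : (0:ℝ) < D := lt_of_lt_of_le one_pos hD1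
  set r : H → ℝ := fun h => (Q.rnDeriv P h).toReal with hr
  set g : H → ℝ := fun h => Real.exp (f h) / r h with hg
  have hrpos : ∀ᵐ h ∂Q, 0 < Q.rnDeriv P h := Measure.rnDeriv_pos hQP
  have hrfin : ∀ᵐ h ∂Q, Q.rnDeriv P h < ⊤ := hQP.ae_le (Measure.rnDeriv_lt_top Q P)
  have hrQ : ∀ᵐ h ∂Q, 0 < r h := by
    filter_upwards [hrpos, hrfin] with h h1 h2
    exact ENNReal.toReal_pos h1.ne' h2.ne
  have hgpos : ∀ᵐ h ∂Q, 0 < g h := by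
    filter_upwards [hrQ] with h h1
    exact div_pos (Real.exp_pos _) h1
  have hgmeas : Measurable g :=
    (Real.measurable_exp.comp hf).div (Measure.measurable_rnDeriv Q P).ennreal_toReal
  -- lintegral bound
  have hlint : ∫⁻ h, ENNReal.ofReal (g h) ∂Q ≤ ENNReal.ofReal D := by
    rw [← MeasureTheory.lintegral_rnDeriv_mul hQP
      (hgmeas.ennreal_ofReal.aemeasurable)]
    have hbound : ∀ᵐ h ∂P, Q.rnDeriv P h * ENNReal.ofReal (g h)
        ≤ ENNReal.ofReal (Real.exp (f h)) := by
      filter_upwards [Measure.rnDeriv_lt_top Q P] with h hfin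
      rcases eq_or_ne (Q.rnDeriv P h) 0 with h0 | h0
      · simp [h0]
      · have htr : 0 < r h := ENNReal.toReal_pos h0 hfin.ne
        have : Q.rnDeriv P h = ENNReal.ofReal (r h) := by
          rw [hr, ENNReal.ofReal_toReal hfin.ne]
        rw [this, ← ENNReal.ofReal_mul htr.le]
        apply ENNReal.ofReal_le_ofReal
        rw [hg]
        rw [mul_div_cancel₀ _ htr.ne']
    calc ∫⁻ h, Q.rnDeriv P h * ENNReal.ofReal (g h) ∂P
        ≤ ∫⁻ h, ENNReal.ofReal (Real.exp (f h)) ∂P := lintegral_mono_ae hbound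
      _ = ENNReal.ofReal D := (ofReal_integral_eq_lintegral_ofReal hexpint
          (Filter.Eventually.of_forall fun h => (Real.exp_pos _).le)).symm
  have hgint : Integrable g Q := by
    constructor
    · exact hgmeas.aestronglyMeasurable
    · rw [hasFiniteIntegral_iff_ofReal (by filter_upwards [hgpos] with h h1; exact h1.le)]
      exact lt_of_le_of_lt hlint ENNReal.ofReal_lt_top
  have hgD : ∫ h, g h ∂Q ≤ D := by
    rw [integral_eq_lintegral_of_nonneg_ae (by filter_upwards [hgpos] with h h1; exact h1.le)
      hgmeas.aestronglyMeasurable]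
    calc (∫⁻ h, ENNReal.ofReal (g h) ∂Q).toReal ≤ (ENNReal.ofReal D).toReal :=
          ENNReal.toReal_mono ENNReal.ofReal_ne_top hlint
      _ = D := ENNReal.toReal_ofReal hD0.le
  -- pointwise: log g = f - log r (a.e. Q)
  have hlogg : ∀ᵐ h ∂Q, Real.log (g h) = f h - Real.log (r h) := by
    filter_upwards [hrQ] with h h1
    rw [hg, Real.log_div (Real.exp_ne_zero _) h1.ne', Real.log_exp]
  -- pointwise: log g ≤ log D + g/D - 1
  have hptwise : ∀ᵐ h ∂Q, Real.log (g h) ≤ Real.log D + g h / D - 1 := by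
    filter_upwards [hgpos] with h h1
    have := Real.log_le_sub_one_of_pos (div_pos h1 hD0)
    rw [Real.log_div h1.ne' hD0.ne'] at this
    linarith
  have hloggint : Integrable (fun h => Real.log (g h)) Q := by
    apply Integrable.congr ((hfint Q).sub hQint)
    filter_upwards [hlogg] with h h1
    exact h1.symm
  have hintineq : ∫ h, Real.log (g h) ∂Q ≤ Real.log D := by
    calc ∫ h, Real.log (g h) ∂Q ≤ ∫ h, (Real.log D + g h / D - 1) ∂Q := by
          apply integral_mono_ae hloggint _ hptwise
          exact (((integrable_const (Real.log D)).add (hgint.div_const D)).sub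
            (integrable_const 1))
      _ = Real.log D + (∫ h, g h ∂Q) / D - 1 := by
          rw [integral_sub _ (integrable_const 1), integral_add (integrable_const _)
            (hgint.div_const D), integral_const, integral_div]
          · simp
          · exact ((integrable_const (Real.log D)).add (hgint.div_const D))
      _ ≤ Real.log D + D / D - 1 := by
          gcongr
      _ = Real.log D := by rw [div_self hD0.ne']; ring
  have hsplit : ∫ h, Real.log (g h) ∂Q
      = ∫ h, f h ∂Q - ∫ h, Real.log (r h) ∂Q := by
    rw [← integral_sub (hfint Q) hQint]
    exact integral_congr_ae hlogg
  rw [hsplit] at hintineq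
  linarith

/-- The Kullback–Leibler divergence `KL(Q‖P) = ∫ log (dQ/dP) dQ`. -/
noncomputable def klDiv {H : Type*} [MeasurableSpace H] (Q P : Measure H) : ℝ :=
  ∫ h, Real.log ((Q.rnDeriv P h).toReal) ∂Q

set_option maxHeartbeats 1000000 in
/-- PAC-Bayesian bound for a `[0,1]`-bounded loss: with probability at least
`1 - δ` over an i.i.d. sample `S` of size `m`, simultaneously for every
posterior `Q` with finite `KL(Q‖P)`,
`E_{h∼Q}[R(h)] ≤ E_{h∼Q}[R̂(h,S)] + √((KL(Q‖P) + ln(2m/δ)) / (2m))`. -/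
theorem pac_bayes_bound
    {Z : Type*} [MeasurableSpace Z] (μ : Measure Z) [IsProbabilityMeasure μ]
    {H : Type*} [MeasurableSpace H] (P : Measure H) [IsProbabilityMeasure P]
    (ℓ : H → Z → ℝ) (hmeas : Measurable (Function.uncurry ℓ))
    (hbd : ∀ h z, ℓ h z ∈ Set.Icc (0 : ℝ) 1)
    (m : ℕ) (hm : 1 ≤ m) (δ : ℝ) (hδ : δ ∈ Set.Ioo (0 : ℝ) 1) :
    ENNReal.ofReal (1 - δ) ≤
      (Measure.pi fun _ : Fin m => μ)
        {S : Fin m → Z |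
          ∀ Q : Measure H, IsProbabilityMeasure Q → Q ≪ P →
            Integrable (fun h => Real.log ((Q.rnDeriv P h).toReal)) Q →
            (∫ h, (∫ z, ℓ h z ∂μ) ∂Q)
              ≤ (∫ h, ((m : ℝ)⁻¹ * ∑ i, ℓ h (S i)) ∂Q)
                + Real.sqrt ((klDiv Q P + Real.log (2 * m / δ)) / (2 * m))} := by
  obtain ⟨hδ0, hδ1⟩ := hδ
  have hm0 : (0:ℝ) < m := by exact_mod_cast hm
  set μm : Measure (Fin m → Z) := Measure.pi fun _ : Fin m => μ with hμm
  haveI : IsProbabilityMeasure μm := by rw [hμm]; infer_instance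
  -- basic measurability of slices
  have hℓh : ∀ h, Measurable (ℓ h) := fun h => hmeas.comp measurable_prodMk_left
  have hℓint : ∀ h, Integrable (ℓ h) μ := by
    intro h
    refine Integrable.mono' (integrable_const 1) (hℓh h).aestronglyMeasurable
      (Filter.Eventually.of_forall fun z => ?_)
    rw [Real.norm_eq_abs, abs_of_nonneg (hbd h z).1]; exact (hbd h z).2
  set R : H → ℝ := fun h => ∫ z, ℓ h z ∂μ with hR
  have hRmeas : Measurable R := by
    have := hmeas.stronglyMeasurable.integral_prod_right' (ν := μ)
    exact this.measurable
  have hR0 : ∀ h, 0 ≤ R h := fun h => integral_nonneg fun z => (hbd h z).1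
  have hR1 : ∀ h, R h ≤ 1 := by
    intro h
    have := integral_mono (hℓint h) (integrable_const 1) (fun z => (hbd h z).2)
    simpa using this
  set Re : (Fin m → Z) → H → ℝ := fun S h => (m:ℝ)⁻¹ * ∑ i, ℓ h (S i) with hRe
  have hRe0 : ∀ S h, 0 ≤ Re S h := by
    intro S h
    apply mul_nonneg (by positivity)
    exact Finset.sum_nonneg fun i _ => (hbd h (S i)).1
  have hRe1 : ∀ S h, Re S h ≤ 1 := by
    intro S h
    rw [hRe]
    rw [inv_mul_le_iff₀ hm0, mul_one]
    calc ∑ i, ℓ h (S i) ≤ ∑ _i : Fin m, (1:ℝ) := Finset.sum_le_sum fun i _ => (hbd h (S i)).2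
      _ = m := by simp
  have hd2 : ∀ S h, (R h - Re S h)^2 ≤ 1 := by
    intro S h
    have h1 := hR0 h; have h2 := hR1 h; have h3 := hRe0 S h; have h4 := hRe1 S h
    nlinarith
  -- ψ on the product space
  set ψ : (Fin m → Z) × H → ℝ :=
    fun q => Real.exp (2*m*(R q.2 - Re q.1 q.2)^2) with hψ
  have hReMeas : Measurable fun q : (Fin m → Z) × H => Re q.1 q.2 := by
    apply Measurable.const_mul
    apply Finset.measurable_sum
    intro i _
    exact hmeas.comp ((measurable_snd).prodMk ((measurable_pi_apply i).comp measurable_fst))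
  have hψmeas : Measurable ψ := by
    apply Real.measurable_exp.comp
    apply Measurable.const_mul
    exact ((hRmeas.comp measurable_snd).sub hReMeas).pow_const 2
  have hψ1 : ∀ q, 1 ≤ ψ q := by
    intro q
    rw [hψ, ← Real.exp_zero, Real.exp_le_exp]
    positivity
  have hψB : ∀ q, ψ q ≤ Real.exp (2*m) := by
    intro q
    rw [hψ, Real.exp_le_exp]
    calc 2*(m:ℝ)*(R q.2 - Re q.1 q.2)^2 ≤ 2*(m:ℝ)*1 :=
          mul_le_mul_of_nonneg_left (hd2 q.1 q.2) (by positivity)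
      _ = 2*m := by ring
  -- G and its properties
  set G : (Fin m → Z) → ℝ := fun S => ∫ h, ψ (S, h) ∂P with hG
  have hGmeas : Measurable G := by
    have := hψmeas.stronglyMeasurable.integral_prod_right' (ν := P)
    exact this.measurable
  have hψSint : ∀ S, Integrable (fun h => ψ (S, h)) P := by
    intro S
    refine Integrable.mono' (integrable_const (Real.exp (2*m)))
      (hψmeas.comp (measurable_prodMk_left)).aestronglyMeasurable
      (Filter.Eventually.of_forall fun h => ?_)
    rw [Real.norm_eq_abs, abs_of_nonneg (by linarith [hψ1 (S, h)])]
    exact hψB _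
  have hG1 : ∀ S, 1 ≤ G S := by
    intro S
    have := integral_mono (integrable_const 1) (hψSint S) (fun h => hψ1 (S, h))
    simpa using this
  have hGB : ∀ S, G S ≤ Real.exp (2*m) := by
    intro S
    have := integral_mono (hψSint S) (integrable_const (Real.exp (2*m))) (fun h => hψB (S, h))
    simpa using this
  have hGint : Integrable G μm := by
    refine Integrable.mono' (integrable_const (Real.exp (2*m))) hGmeas.aestronglyMeasurable
      (Filter.Eventually.of_forall fun S => ?_)
    rw [Real.norm_eq_abs, abs_of_nonneg (by linarith [hG1 S])]
    exact hGB S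
  -- Fubini: ∫ G ≤ m + 1
  have hψprodint : Integrable ψ (μm.prod P) := by
    refine Integrable.mono' (integrable_const (Real.exp (2*m))) hψmeas.aestronglyMeasurable
      (Filter.Eventually.of_forall fun q => ?_)
    rw [Real.norm_eq_abs, abs_of_nonneg (by linarith [hψ1 q])]
    exact hψB q
  have hGexp : ∫ S, G S ∂μm ≤ m + 1 := by
    have hswap := integral_integral_swap (f := fun S h => ψ (S, h)) (μ := μm) (ν := P)
      (by exact hψprodint)
    rw [hG]
    rw [hswap]
    have hinner : ∀ h, ∫ S, ψ (S, h) ∂μm ≤ m + 1 := by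
      intro h
      have := sample_exp_bound μ (ℓ h) (hℓh h) (hbd h) m hm
      rw [hμm]
      exact this
    have hinner_meas : StronglyMeasurable fun h => ∫ S, ψ (S, h) ∂μm :=
      hψmeas.stronglyMeasurable.integral_prod_left'
    have hinner_int : Integrable (fun h => ∫ S, ψ (S, h) ∂μm) P := by
      refine Integrable.mono' (integrable_const ((m:ℝ) + 1)) hinner_meas.aestronglyMeasurable
        (Filter.Eventually.of_forall fun h => ?_)
      rw [Real.norm_eq_abs, abs_of_nonneg]
      · exact hinner h
      · exact integral_nonneg fun S => le_trans zero_le_one (hψ1 (S, h))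
    have := integral_mono hinner_int (integrable_const ((m:ℝ) + 1)) hinner
    simpa using this
  -- Markov
  set c : ℝ := 2*m/δ with hc
  have hc0 : 0 < c := by positivity
  set bad : Set (Fin m → Z) := {S | c ≤ G S} with hbad
  have hbad_meas : MeasurableSet bad := hGmeas measurableSet_Ici
  have hmarkov := mul_meas_ge_le_integral_of_nonneg
    (Filter.Eventually.of_forall fun S => le_trans zero_le_one (hG1 S) : 0 ≤ᵐ[μm] G) hGint c
  have hbadfin : μm bad ≠ ⊤ := (measure_lt_top μm bad).ne
  have hbad_le : μm bad ≤ ENNReal.ofReal δ := by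
    rw [← ENNReal.ofReal_toReal hbadfin]
    apply ENNReal.ofReal_le_ofReal
    have h1 : c * (μm bad).toReal ≤ (m:ℝ) + 1 := le_trans hmarkov hGexp
    have h2 : (m:ℝ) + 1 ≤ 2*m := by
      have : (1:ℝ) ≤ m := by exact_mod_cast hm
      linarith
    have h3 : c * (μm bad).toReal ≤ 2*m := le_trans h1 h2
    rw [hc] at h3
    calc (μm bad).toReal = (2*(m:ℝ)/δ * (μm bad).toReal) * (δ / (2*m)) := by
          field_simp
      _ ≤ (2*(m:ℝ)) * (δ / (2*m)) := by
          apply mul_le_mul_of_nonneg_right h3 (by positivity)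
      _ = δ := by field_simp
  -- good event
  have hgood : ENNReal.ofReal (1 - δ) ≤ μm badᶜ := by
    rw [measure_compl hbad_meas hbadfin]
    have huniv : μm Set.univ = 1 := measure_univ
    rw [huniv]
    calc ENNReal.ofReal (1 - δ) = ENNReal.ofReal 1 - ENNReal.ofReal δ :=
          ENNReal.ofReal_sub 1 hδ0.le
      _ = 1 - ENNReal.ofReal δ := by rw [ENNReal.ofReal_one]
      _ ≤ 1 - μm bad := tsub_le_tsub_left hbad_le 1
  -- inclusion
  refine le_trans hgood (measure_mono ?_)
  intro S hS
  simp only [Set.mem_compl_iff, hbad, Set.mem_setOf_eq, not_le] at hS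
  intro Q hQprob hQP hQint
  haveI := hQprob
  -- apply change of measure with f = 2m Δ²
  set Δ : H → ℝ := fun h => R h - Re S h with hΔ
  have hΔmeas : Measurable Δ := by
    apply hRmeas.sub
    apply Measurable.const_mul
    exact Finset.measurable_sum _ fun i _ => hmeas.comp
      (measurable_id.prodMk measurable_const)
  have hΔbd : ∀ h, Δ h^2 ≤ 1 := fun h => hd2 S h
  have hcom := change_of_measure P Q hQP hQint (fun h => 2*m*(Δ h)^2)
    (by apply Measurable.const_mul; exact hΔmeas.pow_const 2)
    (fun h => by positivity) (2*m)
    (fun h => by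
      calc 2*(m:ℝ)*(Δ h)^2 ≤ 2*(m:ℝ)*1 := mul_le_mul_of_nonneg_left (hΔbd h) (by positivity)
        _ = 2*m := by ring)
  have hGSeq : (∫ h, Real.exp (2*m*(Δ h)^2) ∂P) = G S := by rfl
  rw [hGSeq] at hcom
  have hlogG : Real.log (G S) ≤ Real.log c :=
    Real.log_le_log (by linarith [hG1 S]) hS.le
  -- bound on ∫ Δ² dQ
  have hΔint : Integrable Δ Q := by
    refine Integrable.mono' (integrable_const 1) hΔmeas.aestronglyMeasurable
      (Filter.Eventually.of_forall fun h => ?_)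
    rw [Real.norm_eq_abs, ← Real.sqrt_sq_eq_abs]
    rw [show (1:ℝ) = Real.sqrt 1 by simp]
    exact Real.sqrt_le_sqrt (hΔbd h)
  have hΔ2int : Integrable (fun h => Δ h^2) Q := by
    refine Integrable.mono' (integrable_const 1) (hΔmeas.pow_const 2).aestronglyMeasurable
      (Filter.Eventually.of_forall fun h => ?_)
    rw [Real.norm_eq_abs, abs_of_nonneg (sq_nonneg _)]
    exact hΔbd h
  have h2mΔ : ∫ h, 2*m*(Δ h)^2 ∂Q = 2*m*∫ h, Δ h^2 ∂Q := integral_const_mul _ _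
  rw [h2mΔ] at hcom
  have hΔ2bound : ∫ h, Δ h^2 ∂Q ≤ (klDiv Q P + Real.log c) / (2*m) := by
    rw [le_div_iff₀ (by positivity : (0:ℝ) < 2*m)]
    have : klDiv Q P = ∫ h, Real.log ((Q.rnDeriv P h).toReal) ∂Q := rfl
    rw [this]
    calc (∫ h, Δ h^2 ∂Q) * (2*m) = 2*m*∫ h, Δ h^2 ∂Q := by ring
      _ ≤ (∫ h, Real.log ((Q.rnDeriv P h).toReal) ∂Q) + Real.log (G S) := hcom
      _ ≤ _ := by linarith [hlogG]
  -- Jensen: (∫Δ)² ≤ ∫Δ²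
  have hjensen : (∫ h, Δ h ∂Q)^2 ≤ ∫ h, Δ h^2 ∂Q := by
    set a : ℝ := ∫ h, Δ h ∂Q with ha
    have hexp : ∫ h, (Δ h - a)^2 ∂Q = (∫ h, Δ h^2 ∂Q) - a^2 := by
      have heq : ∀ h, (Δ h - a)^2 = (Δ h^2 - 2*a*Δ h) + a^2 := fun h => by ring
      simp_rw [heq]
      have i1 : Integrable (fun h => Δ h^2 - 2*a*Δ h) Q :=
        hΔ2int.sub (hΔint.const_mul (2*a))
      rw [integral_add i1 (integrable_const (a^2)),
        integral_sub hΔ2int (hΔint.const_mul (2*a)), integral_const_mul, integral_const]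
      simp only [measure_univ, probReal_univ, ENNReal.toReal_one, smul_eq_mul, one_mul]
      rw [← ha]
      ring
    have hnn : 0 ≤ ∫ h, (Δ h - a)^2 ∂Q := integral_nonneg fun h => sq_nonneg _
    linarith [hexp ▸ hnn]
  -- conclude
  have hRint : Integrable R Q := by
    refine Integrable.mono' (integrable_const 1) hRmeas.aestronglyMeasurable
      (Filter.Eventually.of_forall fun h => ?_)
    rw [Real.norm_eq_abs, abs_of_nonneg (hR0 h)]; exact hR1 h
  have hReint : Integrable (fun h => Re S h) Q := by
    refine Integrable.mono' (integrable_const 1) ?_ (Filter.Eventually.of_forall fun h => ?_)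
    · apply Measurable.aestronglyMeasurable
      apply Measurable.const_mul
      exact Finset.measurable_sum _ fun i _ => hmeas.comp
        (measurable_id.prodMk measurable_const)
    · rw [Real.norm_eq_abs, abs_of_nonneg (hRe0 S h)]; exact hRe1 S h
  have hsub : ∫ h, Δ h ∂Q = (∫ h, R h ∂Q) - ∫ h, Re S h ∂Q := integral_sub hRint hReint
  have hfinal : (∫ h, R h ∂Q) - (∫ h, Re S h ∂Q)
      ≤ Real.sqrt ((klDiv Q P + Real.log c) / (2*m)) := by
    rw [← hsub]
    calc ∫ h, Δ h ∂Q ≤ |∫ h, Δ h ∂Q| := le_abs_self _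
      _ = Real.sqrt ((∫ h, Δ h ∂Q)^2) := (Real.sqrt_sq_eq_abs _).symm
      _ ≤ Real.sqrt ((klDiv Q P + Real.log c) / (2*m)) :=
          Real.sqrt_le_sqrt (le_trans hjensen hΔ2bound)
  have : (∫ h, R h ∂Q) ≤ (∫ h, Re S h ∂Q)
      + Real.sqrt ((klDiv Q P + Real.log (2*m/δ)) / (2*m)) := by
    rw [← hc] at *
    linarith [hfinal]
  exact this
end
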